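/- Let G be a game with no cycle of total weight zero over which the supΣ^N-value is finite at every vertex (where N = N_G), and let G' be the potential reduction of G by the potential φ(v) = supΣ^N-value(v). Then both N_{G'} and P_{G'} are contained in N. -/

import Mathlib

/-!
Basic definitions for mean-payoff games: games, infinite paths, positional
strategies, the valuations MP, supΣ^X and infΣ^X, values of vertices,
zones N, P, ZN, ZP (also relative to a sub-arena), reduced games,
potentials and potential reductions, traps.
-/

/-- A game: a sinkless directed graph with integer weights, whose vertices are
partitioned into Min-vertices (`IsMin`) and Max-vertices (`¬ IsMin`). -/
structure MPGame (V : Type*) where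
  E : V → V → Prop
  w : V → V → ℤ
  IsMin : V → Prop
  sinkless : ∀ v, ∃ v', E v v'

namespace MPGame

variable {V : Type*}

/-- An infinite path in a game. -/
structure Path (G : MPGame V) where
  vert : ℕ → V
  adj : ∀ i, G.E (vert i) (vert (i + 1))

/-- The sum of the weights of the first `k` edges of a path. -/
def Path.wsum {G : MPGame V} (π : G.Path) (k : ℕ) : ℤ :=
  ∑ i ∈ Finset.range k, G.w (π.vert i) (π.vert (i + 1))

/-- The tail of a path (drop the first vertex). -/
def Path.tail {G : MPGame V} (π : G.Path) : G.Path :=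
  ⟨fun i => π.vert (i + 1), fun i => π.adj (i + 1)⟩

/-- A positional strategy `σ : V → V` is legal if it always follows an edge. -/
def Legal (G : MPGame V) (σ : V → V) : Prop := ∀ v, G.E v (σ v)

/-- Consistency of a path with a positional Min-strategy. -/
def Path.ConsMin {G : MPGame V} (π : G.Path) (σ : V → V) : Prop :=
  ∀ i, G.IsMin (π.vert i) → π.vert (i + 1) = σ (π.vert i)

/-- Consistency of a path with a positional Max-strategy. -/
def Path.ConsMax {G : MPGame V} (π : G.Path) (τ : V → V) : Prop :=
  ∀ i, ¬ G.IsMin (π.vert i) → π.vert (i + 1) = τ (π.vert i)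

/-- The mean-payoff valuation `MP(π) = limsup_k (1/k) ∑_{i<k} w_i`. -/
noncomputable def MP {G : MPGame V} (π : G.Path) : EReal :=
  Filter.limsup (fun k => (((π.wsum k : ℝ) / (k : ℝ)) : EReal)) Filter.atTop

/-- `supΣ^X(π) = sup_{k ≤ n_X} ∑_{i<k} w_i`, where `n_X` is the first hitting
time of `X` (all `k` if `X` is never hit). -/
noncomputable def supSigma {G : MPGame V} (X : Set V) (π : G.Path) : EReal :=
  ⨆ k : {k : ℕ // ∀ i < k, π.vert i ∉ X}, ((π.wsum k.1 : ℝ) : EReal)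

/-- `infΣ^X(π) = inf_{k ≤ n_X} ∑_{i<k} w_i`. -/
noncomputable def infSigma {G : MPGame V} (X : Set V) (π : G.Path) : EReal :=
  ⨅ k : {k : ℕ // ∀ i < k, π.vert i ∉ X}, ((π.wsum k.1 : ℝ) : EReal)

/-- `inf_σ sup_{π ⊨ σ, π from v} val(π)`, over legal positional Min-strategies. -/
noncomputable def minVal (G : MPGame V) (val : G.Path → EReal) (v : V) : EReal :=
  ⨅ σ : {σ : V → V // G.Legal σ},
    ⨆ π : {π : G.Path // π.vert 0 = v ∧ π.ConsMin σ.1}, val π.1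

/-- `sup_τ inf_{π ⊨ τ, π from v} val(π)`, over legal positional Max-strategies. -/
noncomputable def maxVal (G : MPGame V) (val : G.Path → EReal) (v : V) : EReal :=
  ⨆ τ : {τ : V → V // G.Legal τ},
    ⨅ π : {π : G.Path // π.vert 0 = v ∧ π.ConsMax τ.1}, val π.1

/-- The MP-value of a vertex. -/
noncomputable def MPval (G : MPGame V) (v : V) : EReal := G.minVal MP v

/-- The `supΣ^X`-value of a vertex. -/
noncomputable def supSigmaVal (G : MPGame V) (X : Set V) (v : V) : EReal :=
  G.minVal (supSigma X) v

/-- The `infΣ^X`-value of a vertex. -/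
noncomputable def infSigmaVal (G : MPGame V) (X : Set V) (v : V) : EReal :=
  G.minVal (infSigma X) v

/-- `G` has no cycle of total weight zero: no path repeats a vertex with the
same partial sum of weights. -/
def NoZeroCycle (G : MPGame V) : Prop :=
  ∀ (π : G.Path) (i j : ℕ), i < j → π.vert i = π.vert j → π.wsum i ≠ π.wsum j

/-- The zone `N` of the subgame of `G` induced on `D`: vertices whose
immediately optimal edges (within `D`) have weight `< 0`. -/
def NsetOn (G : MPGame V) (D : Set V) : Set V :=
  {v | v ∈ D ∧ ((G.IsMin v ∧ ∃ v' ∈ D, G.E v v' ∧ G.w v v' < 0) ∨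
      (¬ G.IsMin v ∧ ∀ v' ∈ D, G.E v v' → G.w v v' < 0))}

/-- The zone `P` of the subgame of `G` induced on `D`. -/
def PsetOn (G : MPGame V) (D : Set V) : Set V :=
  {v | v ∈ D ∧ ((¬ G.IsMin v ∧ ∃ v' ∈ D, G.E v v' ∧ 0 < G.w v v') ∨
      (G.IsMin v ∧ ∀ v' ∈ D, G.E v v' → 0 < G.w v v'))}

/-- The zone `N` of `G`. -/
def Nset (G : MPGame V) : Set V := G.NsetOn Set.univ

/-- The zone `P` of `G`. -/
def Pset (G : MPGame V) : Set V := G.PsetOn Set.univ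

/-- The zone `ZN` of the subgame of `G` induced on `D`: vertices from which
Min can force that an edge of weight `< 0` is visited before any edge of
weight `> 0` (staying within `D`). -/
inductive ZNr (G : MPGame V) (D : Set V) : V → Prop
  | minNeg (v v' : V) : v ∈ D → G.IsMin v → v' ∈ D → G.E v v' → G.w v v' < 0 →
      ZNr G D v
  | minZero (v v' : V) : v ∈ D → G.IsMin v → v' ∈ D → G.E v v' → G.w v v' = 0 →
      ZNr G D v' → ZNr G D v
  | max (v : V) : v ∈ D → ¬ G.IsMin v →
      (∀ v' ∈ D, G.E v v' → G.w v v' ≤ 0) →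
      (∀ v', v' ∈ D → G.E v v' → G.w v v' = 0 → ZNr G D v') →
      ZNr G D v

/-- The zone `ZP` of the subgame of `G` induced on `D`. -/
inductive ZPr (G : MPGame V) (D : Set V) : V → Prop
  | maxPos (v v' : V) : v ∈ D → ¬ G.IsMin v → v' ∈ D → G.E v v' → 0 < G.w v v' →
      ZPr G D v
  | maxZero (v v' : V) : v ∈ D → ¬ G.IsMin v → v' ∈ D → G.E v v' → G.w v v' = 0 →
      ZPr G D v' → ZPr G D v
  | min (v : V) : v ∈ D → G.IsMin v →
      (∀ v' ∈ D, G.E v v' → 0 ≤ G.w v v') →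
      (∀ v', v' ∈ D → G.E v v' → G.w v v' = 0 → ZPr G D v') →
      ZPr G D v

/-- The zone `ZN` of `G`. -/
def ZN (G : MPGame V) : V → Prop := G.ZNr Set.univ

/-- The zone `ZP` of `G`. -/
def ZP (G : MPGame V) : V → Prop := G.ZPr Set.univ

/-- The subgame of `G` induced on `D` is reduced: from every vertex of `ZN`,
Min can force that the first edge visited has weight `≤ 0` and leads into
`ZN`, and symmetrically for `ZP` and Max. -/
def ReducedOn (G : MPGame V) (D : Set V) : Prop :=
  (∀ v, G.ZNr D v →
     (G.IsMin v → ∃ v' ∈ D, G.E v v' ∧ G.w v v' ≤ 0 ∧ G.ZNr D v') ∧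
     (¬ G.IsMin v → ∀ v' ∈ D, G.E v v' → G.w v v' ≤ 0 ∧ G.ZNr D v')) ∧
  (∀ v, G.ZPr D v →
     (¬ G.IsMin v → ∃ v' ∈ D, G.E v v' ∧ 0 ≤ G.w v v' ∧ G.ZPr D v') ∧
     (G.IsMin v → ∀ v' ∈ D, G.E v v' → 0 ≤ G.w v v' ∧ G.ZPr D v'))

/-- `G` is reduced. -/
def Reduced (G : MPGame V) : Prop := G.ReducedOn Set.univ

/-- The subgame of `G` induced on `D` is positively reduced: `ZN = ∅`. -/
def PosReducedOn (G : MPGame V) (D : Set V) : Prop := ∀ v, ¬ G.ZNr D v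

/-- `A` is a trap for Min: a sinkless subgraph from which Min cannot escape. -/
def TrapForMin (G : MPGame V) (A : Set V) : Prop :=
  (∀ v ∈ A, ∃ v' ∈ A, G.E v v') ∧
  ∀ v ∈ A, G.IsMin v → ∀ v', G.E v v' → v' ∈ A

/-- `A` is a trap for Max: a sinkless subgraph from which Max cannot escape. -/
def TrapForMax (G : MPGame V) (A : Set V) : Prop :=
  (∀ v ∈ A, ∃ v' ∈ A, G.E v v') ∧
  ∀ v ∈ A, ¬ G.IsMin v → ∀ v', G.E v v' → v' ∈ A

/-- The potential reduction of `G` by the potential `φ`. -/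
def pot (G : MPGame V) (φ : V → ℤ) : MPGame V where
  E := G.E
  w := fun v v' => G.w v v' + φ v' - φ v
  IsMin := G.IsMin
  sinkless := G.sinkless

end MPGame

namespace MPGameAux
open MPGame

lemma ereal_add_iSup (c : ℝ) {ι : Sort*} (f : ι → EReal) :
    (c : EReal) + ⨆ i, f i = ⨆ i, ((c : EReal) + f i) := by
  apply le_antisymm
  · have h : ∀ i, f i ≤ (-c : ℝ) + ⨆ j, ((c:EReal) + f j) := by
      intro i
      have : (c:EReal) + f i ≤ ⨆ j, ((c:EReal) + f j) :=
        le_iSup (fun j => (c:EReal) + f j) i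
      calc f i = (-c : ℝ) + ((c:EReal) + f i) := by
              rw [← add_assoc, ← EReal.coe_add]; norm_num
        _ ≤ (-c : ℝ) + ⨆ j, ((c:EReal) + f j) := add_le_add_right this _
    calc (c:EReal) + ⨆ i, f i ≤ (c:EReal) + ((-c:ℝ) + ⨆ j, ((c:EReal) + f j)) :=
          add_le_add_right (iSup_le h) _
      _ = ⨆ j, ((c:EReal) + f j) := by rw [← add_assoc, ← EReal.coe_add]; norm_num
  · exact iSup_le fun i => add_le_add_right (le_iSup f i) _

variable {V : Type*}

lemma mem_Nset_iff (G : MPGame V) (v : V) :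
    v ∈ G.Nset ↔ (G.IsMin v ∧ ∃ v', G.E v v' ∧ G.w v v' < 0) ∨
      (¬ G.IsMin v ∧ ∀ v', G.E v v' → G.w v v' < 0) := by
  simp [MPGame.Nset, MPGame.NsetOn]

lemma mem_Pset_iff (G : MPGame V) (v : V) :
    v ∈ G.Pset ↔ (¬ G.IsMin v ∧ ∃ v', G.E v v' ∧ 0 < G.w v v') ∨
      (G.IsMin v ∧ ∀ v', G.E v v' → 0 < G.w v v') := by
  simp [MPGame.Pset, MPGame.PsetOn]

noncomputable def follow (G : MPGame V) (σ : V → V) (h : G.Legal σ) (v : V) : G.Path :=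
  ⟨fun i => σ^[i] v, fun i => by
    show G.E (σ^[i] v) (σ^[i+1] v)
    rw [Function.iterate_succ_apply']; exact h _⟩

lemma follow_spec (G : MPGame V) (σ : V → V) (h : G.Legal σ) (v : V) :
    (follow G σ h v).vert 0 = v ∧ (follow G σ h v).ConsMin σ :=
  ⟨rfl, fun i _ => by
    show σ^[i+1] v = σ (σ^[i] v)
    rw [Function.iterate_succ_apply']⟩

instance pathSub_nonempty (G : MPGame V) (σ : {σ : V → V // G.Legal σ}) (v : V) :
    Nonempty {π : G.Path // π.vert 0 = v ∧ π.ConsMin σ.1} :=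
  ⟨⟨follow G σ.1 σ.2 v, follow_spec G σ.1 σ.2 v⟩⟩

instance kSub_nonempty {G : MPGame V} (X : Set V) (π : G.Path) :
    Nonempty {k : ℕ // ∀ i < k, π.vert i ∉ X} :=
  ⟨0, fun i hi => absurd hi (Nat.not_lt_zero i)⟩

lemma supSigma_nonneg {G : MPGame V} (X : Set V) (π : G.Path) :
    (0 : EReal) ≤ supSigma X π := by
  refine le_iSup_of_le ⟨0, fun i hi => absurd hi (Nat.not_lt_zero i)⟩ ?_
  simp [Path.wsum]

def consP (G : MPGame V) (v : V) (π : G.Path) (h : G.E v (π.vert 0)) : G.Path where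
  vert := fun i => match i with | 0 => v | (i+1) => π.vert i
  adj := fun i => match i with | 0 => h | (i+1) => π.adj i

lemma consP_wsum (G : MPGame V) (v : V) (π : G.Path) (h : G.E v (π.vert 0)) (k : ℕ) :
    (consP G v π h).wsum (k+1) = G.w v (π.vert 0) + π.wsum k := by
  simp only [Path.wsum, Finset.sum_range_succ']
  rw [add_comm]
  rfl

lemma wsum_succ' {G : MPGame V} (π : G.Path) (k : ℕ) :
    π.wsum (k+1) = G.w (π.vert 0) (π.vert 1) + π.tail.wsum k := by
  simp only [Path.wsum, Path.tail, Finset.sum_range_succ']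
  rw [add_comm]

section Main

variable (G : MPGame V) (g : V → ℤ)

lemma g_nonneg (hg : ∀ v, G.supSigmaVal G.Nset v = ((g v : ℝ) : EReal)) (v : V) :
    0 ≤ g v := by
  have h : (0 : EReal) ≤ G.supSigmaVal G.Nset v := by
    refine le_iInf fun σ => ?_
    exact le_iSup_of_le ⟨follow G σ.1 σ.2 v, follow_spec G σ.1 σ.2 v⟩
      (supSigma_nonneg _ _)
  rw [hg v] at h
  exact_mod_cast h

lemma consSup (v v' : V) (hvN : v ∉ G.Nset) (σ : V → V) (hσ : G.Legal σ)
    (hE : G.E v v') (hmin : G.IsMin v → σ v = v') :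
    ((G.w v v' : ℝ) : EReal) +
      ⨆ π' : {π' : G.Path // π'.vert 0 = v' ∧ π'.ConsMin σ}, supSigma G.Nset π'.1 ≤
    ⨆ π : {π : G.Path // π.vert 0 = v ∧ π.ConsMin σ}, supSigma G.Nset π.1 := by
  rw [ereal_add_iSup]
  apply iSup_le
  rintro ⟨π', h0, hc⟩
  have hE' : G.E v (π'.vert 0) := h0 ▸ hE
  set πc := consP G v π' hE' with hπc
  have hcc : πc.ConsMin σ := by
    intro i hi
    match i with
    | 0 =>
      show π'.vert 0 = σ v
      rw [h0, hmin hi]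
    | (i+1) => exact hc i hi
  refine le_iSup_of_le ⟨πc, rfl, hcc⟩ ?_
  show ((G.w v v' : ℝ) : EReal) + supSigma G.Nset π' ≤ supSigma G.Nset πc
  unfold MPGame.supSigma
  rw [ereal_add_iSup]
  apply iSup_le
  rintro ⟨k, hk⟩
  have hk' : ∀ i < k+1, πc.vert i ∉ G.Nset := by
    intro i hi
    match i with
    | 0 => exact hvN
    | (i+1) => exact hk i (by omega)
  refine le_trans ?_ (le_iSup_of_le ⟨k+1, hk'⟩ le_rfl)
  rw [← EReal.coe_add]
  apply EReal.coe_le_coe_iff.2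
  rw [consP_wsum, h0]
  push_cast
  exact le_refl _

lemma E2 (hg : ∀ v, G.supSigmaVal G.Nset v = ((g v : ℝ) : EReal))
    (v v' : V) (hvN : v ∉ G.Nset) (hMax : ¬ G.IsMin v) (hE : G.E v v') :
    G.w v v' + g v' ≤ g v := by
  have h : ((G.w v v' + g v' : ℝ) : EReal) ≤ G.supSigmaVal G.Nset v := by
    refine le_iInf fun σ => ?_
    have h1 : ((g v' : ℝ) : EReal) ≤
        ⨆ π' : {π' : G.Path // π'.vert 0 = v' ∧ π'.ConsMin σ.1}, supSigma G.Nset π'.1 := by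
      rw [← hg v']
      exact iInf_le _ σ
    calc ((G.w v v' + g v' : ℝ) : EReal)
        = ((G.w v v' : ℝ) : EReal) + ((g v' : ℝ) : EReal) := by
          rw [← EReal.coe_add]
      _ ≤ ((G.w v v' : ℝ) : EReal) +
            ⨆ π' : {π' : G.Path // π'.vert 0 = v' ∧ π'.ConsMin σ.1}, supSigma G.Nset π'.1 :=
          add_le_add_right h1 _
      _ ≤ _ := consSup G v v' hvN σ.1 σ.2 hE (fun h => absurd h hMax)
  rw [hg v] at h
  exact_mod_cast h

lemma E3 (hg : ∀ v, G.supSigmaVal G.Nset v = ((g v : ℝ) : EReal))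
    (v : V) (hvN : v ∉ G.Nset) (hMin : G.IsMin v) :
    ∃ v', G.E v v' ∧ G.w v v' + g v' ≤ g v := by
  by_contra hcon
  push_neg at hcon
  have h : ((g v + 1 : ℝ) : EReal) ≤ G.supSigmaVal G.Nset v := by
    refine le_iInf fun σ => ?_
    have hE : G.E v (σ.1 v) := σ.2 v
    have hlt : g v + 1 ≤ G.w v (σ.1 v) + g (σ.1 v) := hcon _ hE
    have h1 : ((g (σ.1 v) : ℝ) : EReal) ≤
        ⨆ π' : {π' : G.Path // π'.vert 0 = σ.1 v ∧ π'.ConsMin σ.1}, supSigma G.Nset π'.1 := by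
      rw [← hg (σ.1 v)]
      exact iInf_le _ σ
    calc ((g v + 1 : ℝ) : EReal)
        ≤ ((G.w v (σ.1 v) + g (σ.1 v) : ℝ) : EReal) := by exact_mod_cast hlt
      _ = ((G.w v (σ.1 v) : ℝ) : EReal) + ((g (σ.1 v) : ℝ) : EReal) := by
          rw [← EReal.coe_add]
      _ ≤ ((G.w v (σ.1 v) : ℝ) : EReal) +
            ⨆ π' : {π' : G.Path // π'.vert 0 = σ.1 v ∧ π'.ConsMin σ.1}, supSigma G.Nset π'.1 :=
          add_le_add_right h1 _
      _ ≤ _ := consSup G v (σ.1 v) hvN σ.1 σ.2 hE (fun _ => rfl)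
  rw [hg v] at h
  have : (g v + 1 : ℤ) ≤ g v := by exact_mod_cast h
  omega

variable [Fintype V]

open Classical in
noncomputable def edges (v : V) : Finset V :=
  Finset.univ.filter (fun v' => G.E v v')

lemma mem_edges (v v' : V) : v' ∈ edges G v ↔ G.E v v' := by
  classical
  simp [edges]

lemma edges_nonempty (v : V) : (edges G v).Nonempty := by
  obtain ⟨v', h⟩ := G.sinkless v
  exact ⟨v', (mem_edges G v v').2 h⟩

open Classical in
noncomputable def mval (v : V) : ℤ :=
  if v ∈ G.Nset then 0 else
  if G.IsMin v then
    max 0 ((edges G v).inf' (edges_nonempty G v) (fun v' => G.w v v' + g v'))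
  else
    max 0 ((edges G v).sup' (edges_nonempty G v) (fun v' => G.w v v' + g v'))

lemma mval_nonneg (v : V) : 0 ≤ mval G g v := by
  unfold mval
  split
  · exact le_refl _
  · split <;> exact le_max_left _ _

lemma mval_le_g (hg : ∀ v, G.supSigmaVal G.Nset v = ((g v : ℝ) : EReal)) (v : V) :
    mval G g v ≤ g v := by
  unfold mval
  split
  · exact g_nonneg G g hg v
  · next hvN =>
    split
    · next hMin =>
      obtain ⟨v', hE, hle⟩ := E3 G g hg v hvN hMin
      refine max_le (g_nonneg G g hg v) ?_
      exact le_trans (Finset.inf'_le _ ((mem_edges G v v').2 hE)) hle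
    · next hMax =>
      refine max_le (g_nonneg G g hg v) ?_
      refine Finset.sup'_le _ _ fun v' hv' => ?_
      exact E2 G g hg v v' hvN hMax ((mem_edges G v v').1 hv')

noncomputable def sigS (v : V) : V :=
  ((edges G v).exists_mem_eq_inf' (edges_nonempty G v)
    (fun v' => G.w v v' + g v')).choose

lemma sigS_spec (v : V) :
    sigS G g v ∈ edges G v ∧
      (edges G v).inf' (edges_nonempty G v) (fun v' => G.w v v' + g v')
        = G.w v (sigS G g v) + g (sigS G g v) :=
  ((edges G v).exists_mem_eq_inf' (edges_nonempty G v)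
    (fun v' => G.w v v' + g v')).choose_spec

lemma sigS_legal : G.Legal (sigS G g) :=
  fun v => (mem_edges G v _).1 (sigS_spec G g v).1

lemma key_step (hg : ∀ v, G.supSigmaVal G.Nset v = ((g v : ℝ) : EReal))
    (v v₁ : V) (hvN : v ∉ G.Nset) (hE : G.E v v₁)
    (hmin : G.IsMin v → v₁ = sigS G g v) :
    G.w v v₁ + mval G g v₁ ≤ mval G g v := by
  have hm1 : mval G g v₁ ≤ g v₁ := mval_le_g G g hg v₁
  by_cases hMin : G.IsMin v
  · have hv1 : v₁ = sigS G g v := hmin hMin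
    have hspec := (sigS_spec G g v).2
    have : (edges G v).inf' (edges_nonempty G v) (fun v' => G.w v v' + g v')
        ≤ mval G g v := by
      unfold mval
      rw [if_neg hvN, if_pos hMin]
      exact le_max_right _ _
    rw [hspec] at this
    subst hv1
    omega
  · have hsup : G.w v v₁ + g v₁ ≤
        (edges G v).sup' (edges_nonempty G v) (fun v' => G.w v v' + g v') :=
      Finset.le_sup' (fun v' => G.w v v' + g v') ((mem_edges G v v₁).2 hE)
    have : (edges G v).sup' (edges_nonempty G v) (fun v' => G.w v v' + g v')
        ≤ mval G g v := by
      unfold mval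
      rw [if_neg hvN, if_neg hMin]
      exact le_max_right _ _
    omega

lemma key (hg : ∀ v, G.supSigmaVal G.Nset v = ((g v : ℝ) : EReal)) :
    ∀ (k : ℕ) (π : G.Path), π.ConsMin (sigS G g) →
      (∀ i < k, π.vert i ∉ G.Nset) → π.wsum k ≤ mval G g (π.vert 0) := by
  intro k
  induction k with
  | zero =>
    intro π _ _
    simp only [Path.wsum, Finset.range_zero, Finset.sum_empty]
    exact mval_nonneg G g _
  | succ k ih =>
    intro π hc hk
    have h0 : π.vert 0 ∉ G.Nset := hk 0 (Nat.succ_pos k)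
    have htc : π.tail.ConsMin (sigS G g) := fun i hi => hc (i+1) hi
    have htk : ∀ i < k, π.tail.vert i ∉ G.Nset := fun i hi => hk (i+1) (by omega)
    have hih : π.tail.wsum k ≤ mval G g (π.vert 1) := ih π.tail htc htk
    rw [wsum_succ']
    have hstep : G.w (π.vert 0) (π.vert 1) + mval G g (π.vert 1)
        ≤ mval G g (π.vert 0) :=
      key_step G g hg (π.vert 0) (π.vert 1) h0 (π.adj 0) (fun h => hc 0 h)
    omega

lemma g_le_mval (hg : ∀ v, G.supSigmaVal G.Nset v = ((g v : ℝ) : EReal)) (v : V) :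
    g v ≤ mval G g v := by
  have h : G.supSigmaVal G.Nset v ≤ ((mval G g v : ℝ) : EReal) := by
    refine le_trans (iInf_le _ ⟨sigS G g, sigS_legal G g⟩) ?_
    apply iSup_le
    rintro ⟨π, h0, hc⟩
    apply iSup_le
    rintro ⟨k, hk⟩
    have := key G g hg k π hc hk
    rw [h0] at this
    exact_mod_cast this
  rw [hg v] at h
  exact_mod_cast h

end Main

end MPGameAux


open MPGame in
/-- Lemma 5: if the `supΣ^N`-value is finite (given by
`g : V → ℤ`) at every vertex of `G` and `G'` is the potential reduction of
`G` by `g`, then both `N_{G'}` and `P_{G'}` are contained in `N`. -/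
theorem statement14 {V : Type*} [Fintype V] (G : MPGame V)
    (hz : G.NoZeroCycle)
    (g : V → ℤ) (hg : ∀ v, G.supSigmaVal G.Nset v = ((g v : ℝ) : EReal)) :
    (G.pot g).Nset ⊆ G.Nset ∧ (G.pot g).Pset ⊆ G.Nset := by
  classical
  constructor
  · intro v hv
    by_cases hvN : v ∈ G.Nset
    · exact hvN
    exfalso
    rw [MPGameAux.mem_Nset_iff] at hv
    simp only [MPGame.pot] at hv
    have hglem := MPGameAux.g_le_mval G g hg
    have hgnn := MPGameAux.g_nonneg G g hg
    rcases hv with ⟨hMin, v', hE, hlt⟩ | ⟨hMax, hall⟩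
    · have hw : ∀ u, G.E v u → 0 ≤ G.w v u := by
        intro u hEu
        by_contra hneg
        push_neg at hneg
        exact hvN ((MPGameAux.mem_Nset_iff G v).2 (Or.inl ⟨hMin, u, hEu, hneg⟩))
      have h1 : g v ≤ MPGameAux.mval G g v := hglem v
      have h2 : MPGameAux.mval G g v ≤ max 0 (G.w v v' + g v') := by
        unfold MPGameAux.mval
        rw [if_neg hvN, if_pos hMin]
        exact max_le_max (le_refl 0)
          (Finset.inf'_le _ ((MPGameAux.mem_edges G v v').2 hE))
      have h3 : 0 ≤ G.w v v' := hw v' hE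
      have h4 : 0 ≤ g v' := hgnn v'
      omega
    · have hex : ∃ v₀, G.E v v₀ ∧ 0 ≤ G.w v v₀ := by
        by_contra hne
        push_neg at hne
        exact hvN ((MPGameAux.mem_Nset_iff G v).2 (Or.inr ⟨hMax, hne⟩))
      obtain ⟨v₀, hE₀, hw₀⟩ := hex
      obtain ⟨v₁, hmem₁, heq₁⟩ :=
        Finset.exists_mem_eq_sup' (MPGameAux.edges_nonempty G v)
          (fun v' => G.w v v' + g v')
      have hE₁ := (MPGameAux.mem_edges G v v₁).1 hmem₁
      have h1 : g v ≤ MPGameAux.mval G g v := hglem v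
      have h2 : MPGameAux.mval G g v = max 0 (G.w v v₁ + g v₁) := by
        unfold MPGameAux.mval
        rw [if_neg hvN, if_neg hMax, heq₁]
      have h3 : G.w v v₀ + g v₀ ≤ G.w v v₁ + g v₁ := by
        rw [← heq₁]
        exact Finset.le_sup' (fun v' => G.w v v' + g v')
          ((MPGameAux.mem_edges G v v₀).2 hE₀)
      have h4 := hall v₁ hE₁
      have h5 : 0 ≤ g v₀ := hgnn v₀
      omega
  · intro v hv
    by_cases hvN : v ∈ G.Nset
    · exact hvN
    exfalso
    rw [MPGameAux.mem_Pset_iff] at hv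
    simp only [MPGame.pot] at hv
    rcases hv with ⟨hMax, v', hE, hpos⟩ | ⟨hMin, hall⟩
    · have := MPGameAux.E2 G g hg v v' hvN hMax hE
      omega
    · obtain ⟨v', hE, hle⟩ := MPGameAux.E3 G g hg v hvN hMin
      have := hall v' hE
      omega
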